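/- Let f be a PL homeomorphism of S^1 that preserves the Basilica lamination. Then every breakpoint of f is an arc endpoint if and only if there exists a finite subdivision of S^1 into standard intervals such that f is affine on each interval of the subdivision and maps each such interval onto a standard interval. -/

import Mathlib

noncomputable section

open Set

/-- The circle `S¹ = ℝ/ℤ`. -/
abbrev Circle1 := AddCircle (1 : ℝ)

/-- `F` is affine on the closed interval `[u, v]`. -/
def AffineOn (F : ℝ → ℝ) (u v : ℝ) : Prop :=
  ∃ a b : ℝ, ∀ x ∈ Set.Icc u v, F x = a * x + b

/-- `F : ℝ → ℝ` is a lift of a piecewise-linear homeomorphism of the circle: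
continuous, strictly increasing, commutes with translation by 1, and affine on each
interval of some finite partition of `[0,1]`. -/
def IsPLLift (F : ℝ → ℝ) : Prop :=
  Continuous F ∧ StrictMono F ∧ (∀ x : ℝ, F (x + 1) = F x + 1) ∧
    ∃ (m : ℕ) (t : Fin (m + 1) → ℝ), t 0 = 0 ∧ t (Fin.last m) = 1 ∧ StrictMono t ∧
      ∀ i : Fin m, AffineOn F (t i.castSucc) (t i.succ)

/-- The lift `F : ℝ → ℝ` induces the circle map `f`. -/
def InducedBy (f : Equiv.Perm Circle1) (F : ℝ → ℝ) : Prop :=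
  ∀ x : ℝ, f (x : Circle1) = ((F x : ℝ) : Circle1)

/-- `f` is an (orientation-preserving) piecewise-linear homeomorphism of the circle. -/
def IsPLHomeo (f : Equiv.Perm Circle1) : Prop :=
  ∃ F : ℝ → ℝ, IsPLLift F ∧ InducedBy f F

/-- `F` has right slope `a` at `x`. -/
def HasRightSlope (F : ℝ → ℝ) (x a : ℝ) : Prop :=
  ∃ ε > (0 : ℝ), ∀ y ∈ Set.Icc x (x + ε), F y = F x + a * (y - x)

/-- `F` has left slope `a` at `x`. -/
def HasLeftSlope (F : ℝ → ℝ) (x a : ℝ) : Prop :=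
  ∃ ε > (0 : ℝ), ∀ y ∈ Set.Icc (x - ε) x, F y = F x + a * (y - x)

/-- `x` is a breakpoint of the lift `F`: the left and right slopes at `x` differ. -/
def LiftBreakpointAt (F : ℝ → ℝ) (x : ℝ) : Prop :=
  ∃ a b : ℝ, HasLeftSlope F x a ∧ HasRightSlope F x b ∧ a ≠ b

/-- `p ∈ S¹` is a breakpoint of the PL circle homeomorphism `f`. -/
def IsBreakpoint (f : Equiv.Perm Circle1) (p : Circle1) : Prop :=
  ∃ (F : ℝ → ℝ) (x : ℝ), IsPLLift F ∧ InducedBy f F ∧ (x : Circle1) = p ∧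
    LiftBreakpointAt F x

/-- `s` is a slope of one of the affine pieces of (a lift of) `f`. -/
def IsSlope (f : Equiv.Perm Circle1) (s : ℝ) : Prop :=
  ∃ (F : ℝ → ℝ) (x : ℝ), IsPLLift F ∧ InducedBy f F ∧ HasRightSlope F x s

/-- The unordered pair `{a, b}` is an arc of the Basilica lamination, i.e. equals
`{(3k-1)/(3·2ⁿ) mod 1, (3k+1)/(3·2ⁿ) mod 1}` for some `k ∈ ℤ`, `n ≥ 0`. -/
def IsArc (a b : Circle1) : Prop :=
  ∃ (k : ℤ) (n : ℕ),
    ({a, b} : Set Circle1) =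
      {(((3 * (k : ℝ) - 1) / (3 * 2 ^ n) : ℝ) : Circle1),
       (((3 * (k : ℝ) + 1) / (3 * 2 ^ n) : ℝ) : Circle1)}

/-- `p` is an endpoint of an arc of the Basilica lamination. -/
def IsArcEndpoint (p : Circle1) : Prop :=
  ∃ (k : ℤ) (n : ℕ),
    p = (((3 * (k : ℝ) - 1) / (3 * 2 ^ n) : ℝ) : Circle1) ∨
    p = (((3 * (k : ℝ) + 1) / (3 * 2 ^ n) : ℝ) : Circle1)

/-- `f` preserves the Basilica lamination. -/
def PreservesLamination (f : Equiv.Perm Circle1) : Prop :=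
  ∀ a b : Circle1, IsArc a b ↔ IsArc (f a) (f b)

/-- Membership in `T_B`: a PL homeomorphism of the circle that preserves the Basilica
lamination and all of whose breakpoints are arc endpoints. -/
def MemTB (f : Equiv.Perm Circle1) : Prop :=
  IsPLHomeo f ∧ PreservesLamination f ∧ ∀ p : Circle1, IsBreakpoint f p → IsArcEndpoint p

/-- `(u, v)` are the endpoints of a standard interval, i.e. the real interval `[u,v]` has
the form `[(3k+1)/(3·2ⁿ), (3k+2)/(3·2ⁿ)]` or `[(3k-1)/(3·2ⁿ⁺¹), (3k+1)/(3·2ⁿ⁺¹)]`. -/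
def IsStdPair (u v : ℝ) : Prop :=
  ∃ (k : ℤ) (n : ℕ),
    (u = (3 * (k : ℝ) + 1) / (3 * 2 ^ n) ∧ v = (3 * (k : ℝ) + 2) / (3 * 2 ^ n)) ∨
    (u = (3 * (k : ℝ) - 1) / (3 * 2 ^ (n + 1)) ∧
      v = (3 * (k : ℝ) + 1) / (3 * 2 ^ (n + 1)))

open Filter Topology


theorem coe_eq_iff (x y : ℝ) : ((x : Circle1) = (y : Circle1)) ↔ ∃ n : ℤ, x = y + n := by
  constructor
  · intro h
    obtain ⟨n, hn⟩ := AddSubgroup.mem_zmultiples_iff.mp (QuotientAddGroup.eq.mp h)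
    rw [zsmul_eq_mul, mul_one] at hn
    exact ⟨-n, by push_cast; linarith⟩
  · rintro ⟨n, rfl⟩
    refine QuotientAddGroup.eq.mpr (AddSubgroup.mem_zmultiples_iff.mpr ⟨-n, ?_⟩)
    rw [zsmul_eq_mul, mul_one]; push_cast; ring

theorem pair_eq_pair_iff {α : Type*} {a b c d : α} (hab : a ≠ b)
    (h : ({a, b} : Set α) = {c, d}) : (a = c ∧ b = d) ∨ (a = d ∧ b = c) := by
  have ha : a ∈ ({c, d} : Set α) := h ▸ (by simp)
  have hb : b ∈ ({c, d} : Set α) := h ▸ (by simp)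
  have hc : c ∈ ({a, b} : Set α) := h ▸ (by simp)
  have hd : d ∈ ({a, b} : Set α) := h ▸ (by simp)
  simp only [mem_insert_iff, mem_singleton_iff] at ha hb hc hd
  rcases ha with ha | ha <;> rcases hb with hb | hb <;> tauto

theorem hasRightSlope_unique {F : ℝ → ℝ} {x a b : ℝ}
    (ha : HasRightSlope F x a) (hb : HasRightSlope F x b) : a = b := by
  obtain ⟨ε, hε, hA⟩ := ha; obtain ⟨δ, hδ, hB⟩ := hb
  have hmin : 0 < min ε δ := lt_min hε hδ
  set y := x + min ε δ with hy
  have hyA : y ∈ Icc x (x + ε) := Set.mem_Icc.mpr ⟨by linarith, by linarith [min_le_left ε δ]⟩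
  have hyB : y ∈ Icc x (x + δ) := Set.mem_Icc.mpr ⟨by linarith, by linarith [min_le_right ε δ]⟩
  have h3 := (hA y hyA).symm.trans (hB y hyB)
  have hne : y - x ≠ 0 := by simp only [hy]; intro h; nlinarith
  have : a * (y - x) = b * (y - x) := by linarith
  exact mul_right_cancel₀ hne this

theorem hasLeftSlope_unique {F : ℝ → ℝ} {x a b : ℝ}
    (ha : HasLeftSlope F x a) (hb : HasLeftSlope F x b) : a = b := by
  obtain ⟨ε, hε, hA⟩ := ha; obtain ⟨δ, hδ, hB⟩ := hb
  have hmin : 0 < min ε δ := lt_min hε hδ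
  set y := x - min ε δ with hy
  have hyA : y ∈ Icc (x - ε) x := Set.mem_Icc.mpr ⟨by linarith [min_le_left ε δ], by linarith⟩
  have hyB : y ∈ Icc (x - δ) x := Set.mem_Icc.mpr ⟨by linarith [min_le_right ε δ], by linarith⟩
  have h3 := (hA y hyA).symm.trans (hB y hyB)
  have hne : y - x ≠ 0 := by simp only [hy]; intro h; nlinarith
  have : a * (y - x) = b * (y - x) := by linarith
  exact mul_right_cancel₀ hne this


theorem F_add_int {F : ℝ → ℝ} (hP : ∀ x, F (x + 1) = F x + 1) (x : ℝ) (n : ℤ) :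
    F (x + n) = F x + n := by
  induction n using Int.induction_on with
  | zero => simp
  | succ k ih => push_cast; rw [show x + (k + 1 : ℝ) = (x + k) + 1 by ring, hP]
                 push_cast at ih; rw [ih]; ring
  | pred k ih => push_cast
                 have := hP (x + (-k - 1 : ℝ))
                 rw [show x + (-k - 1 : ℝ) + 1 = x + (-k : ℝ) by ring] at this
                 push_cast at ih; rw [ih] at this; linarith

theorem hasRightSlope_translate {F : ℝ → ℝ} (hP : ∀ x, F (x + 1) = F x + 1)
    {x a : ℝ} (n : ℤ) (h : HasRightSlope F x a) : HasRightSlope F (x + n) a := by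
  obtain ⟨ε, hε, hA⟩ := h
  refine ⟨ε, hε, fun y hy => ?_⟩
  have hy' : y - n ∈ Icc x (x + ε) := ⟨by have := hy.1; linarith, by have := hy.2; linarith⟩
  have := hA (y - n) hy'
  have h1 : F y = F (y - n) + n := by
    have := F_add_int hP (y - n) n; rw [show y - (n:ℝ) + n = y by ring] at this; linarith
  have h2 : F (x + n) = F x + n := F_add_int hP x n
  rw [h1, h2, this]; ring

theorem hasLeftSlope_translate {F : ℝ → ℝ} (hP : ∀ x, F (x + 1) = F x + 1)
    {x a : ℝ} (n : ℤ) (h : HasLeftSlope F x a) : HasLeftSlope F (x + n) a := by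
  obtain ⟨ε, hε, hA⟩ := h
  refine ⟨ε, hε, fun y hy => ?_⟩
  have hy' : y - n ∈ Icc (x - ε) x := ⟨by have := hy.1; linarith, by have := hy.2; linarith⟩
  have := hA (y - n) hy'
  have h1 : F y = F (y - n) + n := by
    have := F_add_int hP (y - n) n; rw [show y - (n:ℝ) + n = y by ring] at this; linarith
  have h2 : F (x + n) = F x + n := F_add_int hP x n
  rw [h1, h2, this]; ring

theorem liftBreakpointAt_translate {F : ℝ → ℝ} (hP : ∀ x, F (x + 1) = F x + 1)
    {x : ℝ} (n : ℤ) (h : LiftBreakpointAt F x) : LiftBreakpointAt F (x + n) := by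
  obtain ⟨a, b, hl, hr, hne⟩ := h
  exact ⟨a, b, hasLeftSlope_translate hP n hl, hasRightSlope_translate hP n hr, hne⟩

theorem slopes_of_add_const {F : ℝ → ℝ} {c x a : ℝ} :
    (HasRightSlope (fun y => F y + c) x a ↔ HasRightSlope F x a) ∧
    (HasLeftSlope (fun y => F y + c) x a ↔ HasLeftSlope F x a) := by
  constructor <;>
  · constructor <;> rintro ⟨ε, hε, hA⟩ <;> exact ⟨ε, hε, fun y hy => by have := hA y hy; simp at this ⊢; linarith⟩

/-- locate `x` in a strictly monotone partition, half-open from the left -/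
theorem find_piece {m : ℕ} {t : Fin (m + 1) → ℝ} (ht : StrictMono t) {x : ℝ}
    (h0 : t 0 ≤ x) (h1 : x < t (Fin.last m)) :
    ∃ i : Fin m, t i.castSucc ≤ x ∧ x < t i.succ := by
  induction m with
  | zero => exact absurd (h0.trans_lt h1) (lt_irrefl _)
  | succ m ih =>
    by_cases hx : x < t (Fin.last m).castSucc
    · have ht' : StrictMono (fun i : Fin (m+1) => t i.castSucc) :=
        fun i j hij => ht (by simpa using hij)
      have h0' : (fun i : Fin (m+1) => t i.castSucc) 0 ≤ x := by
        simpa using h0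
      obtain ⟨i, hi1, hi2⟩ := ih ht' h0' (by simpa using hx)
      exact ⟨i.castSucc, by simpa using hi1, by
        have : (i.succ).castSucc = (i.castSucc).succ := rfl
        rw [← this]; exact hi2⟩
    · push_neg at hx
      refine ⟨Fin.last m, by simpa using hx, by simpa using h1⟩



/-- two lifts of the same circle map differ by an integer constant -/
theorem lifts_differ_by_int {f : Equiv.Perm Circle1} {F G : ℝ → ℝ}
    (hF : Continuous F) (hG : Continuous G)
    (hFf : InducedBy f F) (hGf : InducedBy f G) :
    ∃ n : ℤ, ∀ x : ℝ, G x = F x + n := by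
  have hint : ∀ x : ℝ, ∃ n : ℤ, G x - F x = n := by
    intro x
    have : ((G x : ℝ) : Circle1) = ((F x : ℝ) : Circle1) := by
      rw [← hFf x, ← hGf x]
    obtain ⟨n, hn⟩ := (coe_eq_iff _ _).mp this
    exact ⟨n, by linarith⟩
  obtain ⟨n0, hn0⟩ := hint 0
  refine ⟨n0, fun x => ?_⟩
  by_contra hne
  obtain ⟨nx, hnx⟩ := hint x
  have hnen : nx ≠ n0 := by rintro rfl; exact hne (by linarith)
  have hcont : Continuous (fun y => G y - F y) := hG.sub hF
  have key : ∀ c : ℝ, c ∈ uIcc (G 0 - F 0) (G x - F x) → ∃ ny : ℤ, (ny : ℝ) = c := by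
    intro c hc
    obtain ⟨y, _, hy⟩ := intermediate_value_uIcc (f := fun y => G y - F y)
      (hcont.continuousOn) hc
    obtain ⟨ny, hny⟩ := hint y
    exact ⟨ny, by simp only [] at hy; linarith⟩
  rcases lt_or_gt_of_ne hnen with h | h
  · have h' : (nx : ℝ) ≤ (n0 : ℝ) - 1 := by exact_mod_cast Int.le_sub_one_of_lt h
    obtain ⟨ny, hny⟩ := key ((n0 : ℝ) - 1/2) (by
      rw [Set.mem_uIcc]; right; rw [hn0, hnx]; exact ⟨by linarith, by linarith⟩)
    have : (2 * ny : ℤ) = 2 * n0 - 1 := by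
      have : 2 * (ny : ℝ) = 2 * n0 - 1 := by linarith
      exact_mod_cast this
    omega
  · have h' : (n0 : ℝ) ≤ (nx : ℝ) - 1 := by exact_mod_cast Int.le_sub_one_of_lt h
    obtain ⟨ny, hny⟩ := key ((n0 : ℝ) + 1/2) (by
      rw [Set.mem_uIcc]; left; rw [hn0, hnx]; exact ⟨by linarith, by linarith⟩)
    have : (2 * ny : ℤ) = 2 * n0 + 1 := by
      have : 2 * (ny : ℝ) = 2 * n0 + 1 := by linarith
      exact_mod_cast this
    omega


theorem hasRightSlope_of_affine {F : ℝ → ℝ} {u v a b x : ℝ}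
    (h : ∀ y ∈ Icc u v, F y = a * y + b) (hux : u ≤ x) (hxv : x < v) :
    HasRightSlope F x a := by
  refine ⟨v - x, by linarith, fun y hy => ?_⟩
  have hxm : x ∈ Icc u v := ⟨hux, hxv.le⟩
  have hym : y ∈ Icc u v := ⟨by have := hy.1; linarith, by have := hy.2; linarith⟩
  rw [h y hym, h x hxm]; ring

theorem hasLeftSlope_of_affine {F : ℝ → ℝ} {u v a b x : ℝ}
    (h : ∀ y ∈ Icc u v, F y = a * y + b) (hux : u < x) (hxv : x ≤ v) :
    HasLeftSlope F x a := by
  refine ⟨x - u, by linarith, fun y hy => ?_⟩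
  have hxm : x ∈ Icc u v := ⟨hux.le, hxv⟩
  have hym : y ∈ Icc u v := ⟨by have := hy.1; linarith, by have := hy.2; linarith⟩
  rw [h y hym, h x hxm]; ring

/-- Master gluing lemma: if `F` has exact right slope `a` at `α`, one-sided slopes exist
everywhere in `(α,β)`, and there is no breakpoint in `(α,β)`, then `F` is affine on `[α,β]`
with slope `a`. -/
theorem affine_extend {F : ℝ → ℝ} (hcont : Continuous F) {α β a : ℝ} (hαβ : α < β)
    (hRa : ∃ ε > (0:ℝ), ∀ y ∈ Icc α (α + ε), F y = F α + a * (y - α))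
    (hR : ∀ x, α < x → x < β → ∃ s, HasRightSlope F x s)
    (hnb : ∀ x, α < x → x < β → ¬ LiftBreakpointAt F x) :
    ∀ x ∈ Icc α β, F x = F α + a * (x - α) := by
  set S : Set ℝ := {x | x ∈ Icc α β ∧ ∀ y ∈ Icc α x, F y = F α + a * (y - α)} with hS
  have hSne : α ∈ S := by
    refine ⟨⟨le_refl _, hαβ.le⟩, fun y hy => ?_⟩
    have : y = α := le_antisymm hy.2 hy.1
    rw [this]; ring
  have hbdd : BddAbove S := ⟨β, fun x hx => hx.1.2⟩
  set c := sSup S with hc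
  have hc1 : α ≤ c := le_csSup hbdd hSne
  have hc2 : c ≤ β := csSup_le ⟨α, hSne⟩ (fun x hx => hx.1.2)
  have step1 : ∀ y, α ≤ y → y < c → F y = F α + a * (y - α) := by
    intro y hy1 hy2
    obtain ⟨x, hxS, hyx⟩ := exists_lt_of_lt_csSup ⟨α, hSne⟩ hy2
    exact hxS.2 y ⟨hy1, hyx.le⟩
  have hcS : c ∈ S := by
    refine ⟨⟨hc1, hc2⟩, fun y hy => ?_⟩
    rcases lt_or_eq_of_le hy.2 with h | h
    · exact step1 y hy.1 h
    · subst h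
      rcases eq_or_lt_of_le hc1 with h | h
      · rw [← h]; ring
      · -- continuity from the left
        have hg : Tendsto (fun x => F x - (F α + a * (x - α))) (nhdsWithin c (Iio c))
            (nhds (F c - (F α + a * (c - α)))) :=
          ((hcont.sub (continuous_const.add (continuous_const.mul (continuous_id.sub continuous_const)))).tendsto c).mono_left nhdsWithin_le_nhds
        have hev : ∀ᶠ x in nhdsWithin c (Iio c), (fun x => F x - (F α + a * (x - α))) x = 0 := by
          filter_upwards [Ioo_mem_nhdsLT_of_mem (⟨h, le_refl c⟩ : c ∈ Ioc α c)] with x hx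
          rw [step1 x hx.1.le hx.2]; ring
        have : F c - (F α + a * (c - α)) = 0 :=
          tendsto_nhds_unique hg (Tendsto.congr' (Filter.EventuallyEq.symm hev) tendsto_const_nhds)
        linarith
  rcases eq_or_lt_of_le hc2 with hcβ | hcβ
  · intro x hx
    exact hcS.2 x ⟨hx.1, by rw [hcβ]; exact hx.2⟩
  · exfalso
    -- exact right slope `a` at `c`
    have hra : ∃ ε > (0:ℝ), ∀ y ∈ Icc c (c + ε), F y = F c + a * (y - c) := by
      rcases eq_or_lt_of_le hc1 with h | h
      · obtain ⟨ε, hε, hA⟩ := hRa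
        exact ⟨ε, hε, by rw [← h]; exact hA⟩
      · have hls : HasLeftSlope F c a := by
          refine ⟨c - α, by linarith, fun y hy => ?_⟩
          have h1 := hcS.2 y ⟨by have := hy.1; linarith, hy.2⟩
          have h2 := hcS.2 c ⟨hc1, le_refl _⟩
          rw [h1, h2]; ring
        obtain ⟨s, hs⟩ := hR c h hcβ
        have has : a = s := by
          by_contra hne
          exact hnb c h hcβ ⟨a, s, hls, hs, hne⟩
        obtain ⟨ε, hε, hA⟩ := hs
        exact ⟨ε, hε, fun y hy => by rw [hA y hy, has]⟩
    obtain ⟨ε, hε, hA⟩ := hra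
    have hc'S : min (c + ε) β ∈ S := by
      constructor
      · exact ⟨le_trans hc1 (by rcases le_total (c+ε) β with h|h <;> simp [h] <;> linarith),
          min_le_right _ _⟩
      · intro y hy
        rcases le_or_gt y c with h | h
        · exact hcS.2 y ⟨hy.1, h⟩
        · have hyc : y ∈ Icc c (c + ε) :=
            ⟨h.le, le_trans hy.2 (min_le_left _ _)⟩
          have h2 := hcS.2 c ⟨hc1, le_refl _⟩
          rw [hA y hyc, h2]; ring
    have : min (c + ε) β ≤ c := le_csSup hbdd hc'S
    have : c < min (c + ε) β := lt_min (by linarith) hcβ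
    linarith


theorem int_zero_of_abs_lt {z : ℤ} (h1 : (-1:ℝ) < z) (h2 : (z:ℝ) < 1) : z = 0 := by
  have h1' : (-1:ℤ) < z := by exact_mod_cast h1
  have h2' : z < 1 := by exact_mod_cast h2
  omega

theorem no_int_in_Ioo {z : ℤ} (h1 : (0:ℝ) < z) (h2 : (z:ℝ) < 1) : False := by
  have h1' : (0:ℤ) < z := by exact_mod_cast h1
  have h2' : z < 1 := by exact_mod_cast h2
  omega

set_option maxHeartbeats 1000000 in
theorem piece_form {f : Equiv.Perm Circle1} {F : ℝ → ℝ}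
    (hlam : PreservesLamination f) (hind : InducedBy f F) (hmono : StrictMono F)
    {u v aP bP : ℝ} (huv : u < v) (haff : ∀ x ∈ Icc u v, F x = aP * x + bP) :
    ∃ (j : ℤ) (e : ℤ) (M : ℕ), aP = (2:ℝ)^j ∧ bP = (e:ℝ) / 2^M := by
  -- the slope is positive
  have hFuv : F u < F v := hmono huv
  have hu : u ∈ Icc u v := ⟨le_refl _, huv.le⟩
  have hv : v ∈ Icc u v := ⟨huv.le, le_refl _⟩
  have haP : 0 < aP := by
    rw [haff u hu, haff v hv] at hFuv; nlinarith
  -- choose a deep level n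
  obtain ⟨n1, hn1⟩ := pow_unbounded_of_one_lt (5 / (3 * (v - u))) (one_lt_two (α := ℝ))
  obtain ⟨n2, hn2⟩ := pow_unbounded_of_one_lt (2 * aP) (one_lt_two (α := ℝ))
  set n := max n1 n2 with hn
  have hp1 : (5 / (3 * (v - u)) : ℝ) < 2 ^ n :=
    lt_of_lt_of_le hn1 (pow_le_pow_right₀ one_le_two (le_max_left _ _))
  have hp2 : (2 * aP : ℝ) < 2 ^ n :=
    lt_of_lt_of_le hn2 (pow_le_pow_right₀ one_le_two (le_max_right _ _))
  set D : ℝ := 3 * 2 ^ n with hD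
  have hDpos : (0:ℝ) < D := by positivity
  have hDvu : 5 < D * (v - u) := by
    rw [hD]
    have : (0:ℝ) < v - u := by linarith
    calc (5:ℝ) = (5 / (3 * (v-u))) * (3 * (v-u)) := by field_simp
    _ < 2^n * (3 * (v-u)) := by apply mul_lt_mul_of_pos_right hp1; positivity
    _ = 3 * 2^n * (v - u) := by ring
  -- find an arc (p,q) inside (u,v)
  set k : ℤ := ⌊(D * u + 1) / 3⌋ + 1 with hk
  have hk1 : D * u + 1 < 3 * k := by
    have := Int.lt_floor_add_one ((D * u + 1) / 3)
    push_cast [hk]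
    nlinarith [this]
  have hk2 : 3 * (k:ℝ) < D * v - 1 := by
    have := Int.floor_le ((D * u + 1) / 3)
    push_cast [hk]
    nlinarith [this]
  set p : ℝ := (3 * (k:ℝ) - 1) / (3 * 2 ^ n) with hp
  set q : ℝ := (3 * (k:ℝ) + 1) / (3 * 2 ^ n) with hq
  have hup : u < p := by
    rw [hp, lt_div_iff₀ (by positivity)]
    rw [hD] at hk1; linarith
  have hqv : q < v := by
    rw [hq, div_lt_iff₀ (by positivity)]
    rw [hD] at hk2; linarith
  have hpq : p < q := by
    rw [hp, hq, div_lt_div_iff₀ (by positivity) (by positivity)]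
    nlinarith [pow_pos (zero_lt_two (α := ℝ)) n]
  have hpm : p ∈ Icc u v := ⟨hup.le, by linarith⟩
  have hqm : q ∈ Icc u v := ⟨by linarith, hqv.le⟩
  -- the image is an arc
  have harc : IsArc (f p) (f q) := (hlam p q).mp ⟨k, n, rfl⟩
  rw [hind p, hind q] at harc
  obtain ⟨k', n', hset⟩ := harc
  set D' : ℝ := 3 * 2 ^ n' with hD'
  have hD'pos : (0:ℝ) < D' := by positivity
  have hD'le : (2:ℝ) / D' ≤ 2 / 3 := by
    rw [hD', div_le_div_iff₀ (by positivity) (by norm_num)]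
    have : (1:ℝ) ≤ 2 ^ n' := one_le_pow₀ one_le_two
    nlinarith
  -- basic estimates on W = F q - F p
  have hqp : q - p = 2 / D := by
    rw [hp, hq, hD]
    have h2n0 : (2:ℝ)^n ≠ 0 := by positivity
    field_simp
    ring
  have hW : F q - F p = aP * (2 / D) := by
    rw [haff q hqm, haff p hpm, ← hqp]; ring
  have hWpos : 0 < F q - F p := by rw [hW, hqp] at *; positivity
  have hWlt : F q - F p < 1 / 3 := by
    rw [hW, hD]
    calc aP * (2 / (3 * 2^n)) < (2^n / 2) * (2 / (3 * 2^n)) := by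
          apply mul_lt_mul_of_pos_right (by linarith) (by positivity)
    _ = 1 / 3 := by field_simp
  have hne : ((F p : ℝ) : Circle1) ≠ ((F q : ℝ) : Circle1) := by
    intro h
    obtain ⟨z, hz⟩ := (coe_eq_iff _ _).mp h
    have : (z:ℝ) = -(F q - F p) := by linarith
    have h0 : (0:ℝ) < ((-z : ℤ) : ℝ) := by push_cast; linarith
    have h1 : ((-z : ℤ) : ℝ) < 1 := by push_cast; linarith
    exact no_int_in_Ioo h0 h1
  have hcases := pair_eq_pair_iff hne hset
  set A : ℝ := (3 * (k':ℝ) - 1) / (3 * 2 ^ n') with hA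
  set B : ℝ := (3 * (k':ℝ) + 1) / (3 * 2 ^ n') with hB
  have hBA : B - A = 2 / D' := by rw [hA, hB, hD']; field_simp; ring
  have key : F p = A + ⌊F p - A⌋ ∧ F q - F p = 2 / D' := by
    rcases hcases with ⟨h1, h2⟩ | ⟨h1, h2⟩
    · obtain ⟨m1, hm1⟩ := (coe_eq_iff _ _).mp h1
      obtain ⟨m2, hm2⟩ := (coe_eq_iff _ _).mp h2
      have hz : F q - F p = 2 / D' + (m2 - m1 : ℤ) := by push_cast; rw [← hBA]; linarith
      have hd2 : (0:ℝ) < 2 / D' := by positivity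
      have hd1 : ((m2 - m1 : ℤ) : ℝ) = (F q - F p) - 2 / D' := by push_cast; push_cast at hz; linarith
      have hz0 : (m2 - m1 : ℤ) = 0 := by
        apply int_zero_of_abs_lt <;> rw [hd1] <;> linarith
      rw [hz0] at hz; push_cast at hz
      have hflr : (⌊F p - A⌋ : ℤ) = m1 := by
        rw [hm1]; rw [show A + (m1:ℝ) - A = (m1:ℝ) by ring]; exact_mod_cast Int.floor_intCast m1
      constructor
      · rw [hflr, hm1]
      · linarith
    · exfalso
      obtain ⟨m1, hm1⟩ := (coe_eq_iff _ _).mp h1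
      obtain ⟨m2, hm2⟩ := (coe_eq_iff _ _).mp h2
      have hd2 : (0:ℝ) < 2 / D' := by positivity
      have hz : ((m2 - m1 : ℤ) : ℝ) = (F q - F p) + (2 / D') := by push_cast; linarith [hBA]
      have h0 : (0:ℝ) < ((m2 - m1 : ℤ) : ℝ) := by rw [hz]; linarith
      have h1 : ((m2 - m1 : ℤ) : ℝ) < 1 := by rw [hz]; linarith
      exact no_int_in_Ioo h0 h1
  obtain ⟨hFp, hW2⟩ := key
  -- slope is a power of 2
  have haP2 : aP = (2:ℝ) ^ ((n:ℤ) - (n':ℤ)) := by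
    have h1 : aP * (2 / D) = 2 / D' := by rw [← hW, hW2]
    have hD0 : D ≠ 0 := ne_of_gt hDpos
    have hD'0 : D' ≠ 0 := ne_of_gt hD'pos
    have e1 : aP * (2 / D) * (D * D') = aP * 2 * D' := by
      field_simp
    have e2 : 2 / D' * (D * D') = 2 * D := by
      field_simp
    have h2 : aP * 2 * D' = 2 * D := by
      rw [← e1, h1, e2]
    have h3 : aP * 2^n' = 2^n := by rw [hD, hD'] at h2; nlinarith
    rw [zpow_sub₀ (two_ne_zero (α := ℝ)), zpow_natCast, zpow_natCast,
      eq_div_iff (by positivity : (2:ℝ)^n' ≠ 0)]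
    exact h3
  -- intercept is dyadic
  refine ⟨(n:ℤ) - n', (k' - k) + ⌊F p - A⌋ * 2^n', n', haP2, ?_⟩
  have hbP : bP = F p - aP * p := by rw [haff p hpm]; ring
  generalize hfl : ⌊F p - A⌋ = fl at hFp ⊢
  rw [hbP, hFp, haP2, hA, hp]
  have h2n : (2:ℝ) ^ ((n:ℤ) - (n':ℤ)) = 2^n / 2^n' := by
    rw [zpow_sub₀ (two_ne_zero (α := ℝ)), zpow_natCast, zpow_natCast]
  rw [h2n]
  push_cast
  field_simp
  ring


/-- numerator offsets for the standard grid at level `N` -/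
def gOff (i : ℕ) : ℕ := i + i / 2

theorem gOff_strictMono : StrictMono gOff := by
  apply strictMono_nat_of_lt_succ
  intro n
  unfold gOff
  omega

theorem gOff_zero : gOff 0 = 0 := rfl

theorem gOff_top (M : ℕ) : gOff (2 * M) = 3 * M := by unfold gOff; omega

/-- a standard pair from numerator data at level `R ≥ 1` -/
theorem stdPair_of_numerators {u v : ℝ} {kk : ℤ} {R : ℕ} (hR : 1 ≤ R)
    (h : (u = (3*(kk:ℝ)+1)/(3*2^R) ∧ v = (3*(kk:ℝ)+2)/(3*2^R)) ∨
         (u = (3*(kk:ℝ)-1)/(3*2^R) ∧ v = (3*(kk:ℝ)+1)/(3*2^R))) : IsStdPair u v := by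
  rcases h with ⟨h1, h2⟩ | ⟨h1, h2⟩
  · exact ⟨kk, R, Or.inl ⟨h1, h2⟩⟩
  · refine ⟨kk, R - 1, Or.inr ?_⟩
    rw [show R - 1 + 1 = R by omega]
    exact ⟨h1, h2⟩

/-- the numerator pattern of the grid -/
theorem grid_cases (N c : ℕ) (hc : (2:ℕ)^N = 3*c+1) (i : ℕ) :
    ∃ kk : ℤ,
      ((2^N + gOff i : ℕ) : ℤ) = 3*kk+1 ∧ ((2^N + gOff (i+1) : ℕ) : ℤ) = 3*kk+2 ∨
      ((2^N + gOff i : ℕ) : ℤ) = 3*kk-1 ∧ ((2^N + gOff (i+1) : ℕ) : ℤ) = 3*kk+1 := by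
  rcases Nat.even_or_odd i with ⟨l, hl⟩ | ⟨l, hl⟩
  · refine ⟨(c:ℤ) + l, Or.inl ⟨?_, ?_⟩⟩ <;>
    · have e1 : gOff i = 3*l := by unfold gOff; omega
      have e2 : gOff (i+1) = 3*l+1 := by unfold gOff; omega
      push_cast [e1, e2, hc]
      push_cast [hc]
      omega
  · refine ⟨(c:ℤ) + l + 1, Or.inr ⟨?_, ?_⟩⟩ <;>
    · have e1 : gOff i = 3*l+1 := by unfold gOff; omega
      have e2 : gOff (i+1) = 3*l+3 := by unfold gOff; omega
      push_cast [e1, e2, hc]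
      push_cast [hc]
      omega

/-- no point `l/(3·2^ν)` with `3 ∤ l`, `ν ≤ N` lies strictly inside a grid interval -/
theorem grid_no_interior (N c : ℕ) (hc : (2:ℕ)^N = 3*c+1) (i : ℕ) {l : ℤ} {ν : ℕ}
    (hν : ν ≤ N) (hl : ¬ (3:ℤ) ∣ l)
    (h1 : ((2^N + gOff i : ℕ) : ℝ) / (3*2^N) < (l:ℝ)/(3*2^ν))
    (h2 : (l:ℝ)/(3*2^ν) < ((2^N + gOff (i+1) : ℕ) : ℝ) / (3*2^N)) : False := by
  set L : ℤ := l * 2^(N - ν) with hL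
  have hcast : (L:ℝ)/(3*2^N) = (l:ℝ)/(3*2^ν) := by
    rw [hL]
    have hsplit : (2:ℝ)^N = 2^(N-ν) * 2^ν := by
      rw [← pow_add, Nat.sub_add_cancel hν]
    rw [hsplit]
    push_cast
    have hp1 : (0:ℝ) < (2:ℝ)^(N-ν) := by positivity
    have hp2 : (0:ℝ) < (2:ℝ)^ν := by positivity
    field_simp
  rw [← hcast] at h1 h2
  have hD : (0:ℝ) < 3*2^N := by positivity
  have g1 : ((2^N + gOff i : ℕ) : ℝ) < (L:ℝ) := by
    rw [div_lt_div_iff₀ hD hD] at h1; nlinarith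
  have g2 : (L:ℝ) < ((2^N + gOff (i+1) : ℕ) : ℝ) := by
    rw [div_lt_div_iff₀ hD hD] at h2; nlinarith
  have g1' : ((2^N + gOff i : ℕ) : ℤ) < L := by exact_mod_cast g1
  have g2' : L < ((2^N + gOff (i+1) : ℕ) : ℤ) := by exact_mod_cast g2
  have hLd : ¬ (3:ℤ) ∣ L := by
    rw [hL]
    intro hdvd
    have hp : Prime (3:ℤ) := Int.prime_three
    rcases hp.dvd_mul.mp hdvd with h | h
    · exact hl h
    · have h4 := hp.dvd_of_dvd_pow (n := N - ν) (a := (2:ℤ)) h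
      norm_num at h4
  obtain ⟨kk, hcase⟩ := grid_cases N c hc i
  rcases hcase with ⟨e1, e2⟩ | ⟨e1, e2⟩ <;> rw [e1] at g1' <;> rw [e2] at g2' <;> omega


theorem image_affine_numerator {jj e' : ℤ} {MM R R' : ℕ} {k : ℤ} (δ : ℝ)
    (hjR : jj + (R' : ℤ) = (R : ℤ)) (hMR : MM ≤ R') :
    (2:ℝ)^jj * ((3*(k:ℝ)+δ)/(3*2^R)) + (e':ℝ)/2^MM
      = (3*((k + e'*2^(R'-MM) : ℤ):ℝ) + δ)/(3*2^R') := by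
  have h2R : (2:ℝ)^jj = 2^R / 2^R' := by
    have : jj = (R:ℤ) - (R':ℤ) := by omega
    rw [this, zpow_sub₀ (two_ne_zero (α := ℝ)), zpow_natCast, zpow_natCast]
  have hsplit : (2:ℝ)^R' = 2^MM * 2^(R'-MM) := by
    rw [← pow_add, Nat.add_sub_cancel' hMR]
  have hR0 : (2:ℝ)^R ≠ 0 := by positivity
  have hR'0 : (2:ℝ)^R' ≠ 0 := by positivity
  have hMM0 : (2:ℝ)^MM ≠ 0 := by positivity
  rw [h2R]
  push_cast
  rw [hsplit]
  field_simp
  ring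


theorem find_piece' {m : ℕ} {t : Fin (m + 1) → ℝ} (ht : StrictMono t) {x : ℝ}
    (h0 : t 0 < x) (h1 : x ≤ t (Fin.last m)) :
    ∃ i : Fin m, t i.castSucc < x ∧ x ≤ t i.succ := by
  induction m with
  | zero => exact absurd (h0.trans_le h1) (lt_irrefl _)
  | succ m ih =>
    by_cases hx : t (1 : Fin (m + 2)) < x
    · have ht' : StrictMono (fun i : Fin (m+1) => t i.succ) :=
        fun i j hij => ht (by simpa using hij)
      have h0' : (fun i : Fin (m+1) => t i.succ) 0 < x := by
        simpa using hx
      obtain ⟨i, hi1, hi2⟩ := ih ht' h0' (by simpa [Fin.succ_last] using h1)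
      exact ⟨i.succ, by simpa using hi1, by simpa using hi2⟩
    · push_neg at hx
      exact ⟨0, h0, hx⟩

section Partition

variable {F : ℝ → ℝ} {m : ℕ} {t : Fin (m + 1) → ℝ}
  (hP : ∀ x, F (x + 1) = F x + 1) (h0 : t 0 = 0) (h1 : t (Fin.last m) = 1)
  (hmono : StrictMono t) (haff : ∀ i : Fin m, AffineOn F (t i.castSucc) (t i.succ))

include hP h0 h1 hmono haff

theorem right_slope_exists : ∀ x : ℝ, ∃ s, HasRightSlope F x s := by
  intro x
  have hfr : Int.fract x ∈ Ico (0:ℝ) 1 := ⟨Int.fract_nonneg x, Int.fract_lt_one x⟩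
  obtain ⟨i, hi1, hi2⟩ := find_piece (x := Int.fract x) hmono (by rw [h0]; exact hfr.1) (by rw [h1]; exact hfr.2)
  obtain ⟨a, b, hab⟩ := haff i
  have hs : HasRightSlope F (Int.fract x) a := hasRightSlope_of_affine hab hi1 hi2
  have := hasRightSlope_translate hP ⌊x⌋ hs
  rw [Int.fract, sub_add_cancel] at this
  exact ⟨a, this⟩

theorem left_slope_exists : ∀ x : ℝ, ∃ s, HasLeftSlope F x s := by
  intro x
  set y := x - (⌈x⌉ - 1 : ℤ) with hy
  have hy1 : 0 < y := by
    rw [hy]; push_cast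
    have := Int.ceil_lt_add_one x
    linarith
  have hy2 : y ≤ 1 := by
    rw [hy]; push_cast
    have := Int.le_ceil x
    linarith
  obtain ⟨i, hi1, hi2⟩ := find_piece' (x := y) hmono (by rw [h0]; exact hy1) (by rw [h1]; exact hy2)
  obtain ⟨a, b, hab⟩ := haff i
  have hs : HasLeftSlope F y a := hasLeftSlope_of_affine hab hi1 hi2
  have := hasLeftSlope_translate hP (⌈x⌉ - 1) hs
  rw [hy, sub_add_cancel] at this
  exact ⟨a, this⟩

/-- breakpoints only occur at partition points (mod 1) -/
theorem breakpoint_at_junction {x : ℝ} (hbp : LiftBreakpointAt F x) :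
    ∃ (i : Fin m) (z : ℤ), x = t i.castSucc + z := by
  have hfr : Int.fract x ∈ Ico (0:ℝ) 1 := ⟨Int.fract_nonneg x, Int.fract_lt_one x⟩
  obtain ⟨i, hi1, hi2⟩ := find_piece (x := Int.fract x) hmono (by rw [h0]; exact hfr.1) (by rw [h1]; exact hfr.2)
  refine ⟨i, ⌊x⌋, ?_⟩
  rcases eq_or_lt_of_le hi1 with h | h
  · rw [h, Int.fract]; push_cast; ring
  · exfalso
    obtain ⟨a, b, hab⟩ := haff i
    have hr : HasRightSlope F (Int.fract x) a := hasRightSlope_of_affine hab hi1 hi2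
    have hl : HasLeftSlope F (Int.fract x) a := hasLeftSlope_of_affine hab h hi2.le
    have hbp' : LiftBreakpointAt F (Int.fract x) := by
      have h2 := liftBreakpointAt_translate hP (-⌊x⌋) hbp
      have h3 : x + ((-⌊x⌋ : ℤ) : ℝ) = Int.fract x := by rw [Int.fract]; push_cast; ring
      rwa [h3] at h2
    obtain ⟨a', b', hl', hr', hne⟩ := hbp'
    rw [hasLeftSlope_unique hl' hl, hasRightSlope_unique hr' hr] at hne
    exact hne rfl

end Partition

/-- Arc endpoints, as real numbers: `l/(3·2^ν)` with `3 ∤ l`. -/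
theorem arcEndpoint_real_form {x : ℝ} (h : IsArcEndpoint (x : Circle1)) :
    ∃ (l : ℤ) (ν : ℕ), ¬ (3 ∣ l) ∧ x = (l : ℝ) / (3 * 2 ^ ν) := by
  obtain ⟨k, n, h | h⟩ := h
  · obtain ⟨z, hz⟩ := (coe_eq_iff _ _).mp h
    have h3 : 3 * k - 1 + 3 * 2 ^ n * z = 3 * (k + 2 ^ n * z) - 1 := by ring
    refine ⟨3 * k - 1 + 3 * 2 ^ n * z, n, fun hdvd => ?_, ?_⟩
    · rw [h3] at hdvd
      obtain ⟨c, hc⟩ := hdvd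
      generalize k + 2 ^ n * z = u at hc
      omega
    push_cast
    rw [hz]
    have : (0:ℝ) < 3 * 2 ^ n := by positivity
    field_simp
  · obtain ⟨z, hz⟩ := (coe_eq_iff _ _).mp h
    have h3 : 3 * k + 1 + 3 * 2 ^ n * z = 3 * (k + 2 ^ n * z) + 1 := by ring
    refine ⟨3 * k + 1 + 3 * 2 ^ n * z, n, fun hdvd => ?_, ?_⟩
    · rw [h3] at hdvd
      obtain ⟨c, hc⟩ := hdvd
      generalize k + 2 ^ n * z = u at hc
      omega
    push_cast
    rw [hz]
    have : (0:ℝ) < 3 * 2 ^ n := by positivity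
    field_simp


theorem reverse_dir {f : Equiv.Perm Circle1}
    (h : ∃ F : ℝ → ℝ, IsPLLift F ∧ InducedBy f F ∧
      ∃ (m : ℕ) (t : Fin (m + 1) → ℝ), StrictMono t ∧ t (Fin.last m) = t 0 + 1 ∧
        ∀ i : Fin m,
          IsStdPair (t i.castSucc) (t i.succ) ∧
          AffineOn F (t i.castSucc) (t i.succ) ∧
          IsStdPair (F (t i.castSucc)) (F (t i.succ))) :
    ∀ p : Circle1, IsBreakpoint f p → IsArcEndpoint p := by
  obtain ⟨F, hlift, hind, m, t, hmono, hlast, hprops⟩ := h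
  rintro p ⟨G, x, hGlift, hGind, rfl, hbrk⟩
  obtain ⟨hFc, hFm, hFP, _⟩ := hlift
  obtain ⟨hGc, hGm, hGP, _⟩ := hGlift
  -- transfer the breakpoint to F
  obtain ⟨n, hn⟩ := lifts_differ_by_int hFc hGc hind hGind
  have hGF : G = fun y => F y + (n : ℝ) := funext hn
  have hbrkF : LiftBreakpointAt F x := by
    obtain ⟨a, b, hl, hr, hne⟩ := hbrk
    rw [hGF] at hl hr
    exact ⟨a, b, slopes_of_add_const.2.mp hl, slopes_of_add_const.1.mp hr, hne⟩
  -- normalize x into [t 0, t 0 + 1)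
  set z : ℤ := ⌊x - t 0⌋ with hz
  set x0 : ℝ := x - z with hx0
  have hx01 : t 0 ≤ x0 := by
    rw [hx0, hz]
    have := Int.floor_le (x - t 0)
    linarith
  have hx02 : x0 < t (Fin.last m) := by
    rw [hlast, hx0, hz]
    have := Int.lt_floor_add_one (x - t 0)
    linarith
  have hbrk0 : LiftBreakpointAt F x0 := by
    have h2 := liftBreakpointAt_translate hGP (-z) hbrk
    have hbrkG0 : LiftBreakpointAt G x0 := by
      rwa [show x + ((-z : ℤ) : ℝ) = x0 by rw [hx0]; push_cast; ring] at h2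
    obtain ⟨a, b, hl, hr, hne⟩ := hbrkG0
    rw [hGF] at hl hr
    exact ⟨a, b, slopes_of_add_const.2.mp hl, slopes_of_add_const.1.mp hr, hne⟩
  have hpx0 : ((x : ℝ) : Circle1) = ((x0 : ℝ) : Circle1) := by
    exact (coe_eq_iff _ _).mpr ⟨z, by rw [hx0]; ring⟩
  obtain ⟨i, hi1, hi2⟩ := find_piece (x := x0) hmono hx01 hx02
  rcases eq_or_lt_of_le hi1 with heq | hlt
  · -- x0 is a partition point: a standard-interval endpoint, hence an arc endpoint
    rw [hpx0, ← heq]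
    obtain ⟨k, nn, hstd | hstd⟩ := (hprops i).1
    · exact ⟨k, nn, Or.inr (by rw [hstd.1])⟩
    · exact ⟨k, nn + 1, Or.inl (by rw [hstd.1])⟩
  · -- x0 is interior to an affine piece: no breakpoint there
    exfalso
    obtain ⟨a, b, hab⟩ := (hprops i).2.1
    have hr : HasRightSlope F x0 a := hasRightSlope_of_affine hab hi1 hi2
    have hl : HasLeftSlope F x0 a := hasLeftSlope_of_affine hab hlt hi2.le
    obtain ⟨a', b', hl', hr', hne⟩ := hbrk0
    rw [hasLeftSlope_unique hl' hl, hasRightSlope_unique hr' hr] at hne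
    exact hne rfl


set_option maxHeartbeats 1000000 in
theorem forward_dir {f : Equiv.Perm Circle1} (hf : IsPLHomeo f)
    (hlam : PreservesLamination f)
    (hbp : ∀ p : Circle1, IsBreakpoint f p → IsArcEndpoint p) :
    ∃ F : ℝ → ℝ, IsPLLift F ∧ InducedBy f F ∧
      ∃ (m : ℕ) (t : Fin (m + 1) → ℝ), StrictMono t ∧ t (Fin.last m) = t 0 + 1 ∧
        ∀ i : Fin m,
          IsStdPair (t i.castSucc) (t i.succ) ∧
          AffineOn F (t i.castSucc) (t i.succ) ∧
          IsStdPair (F (t i.castSucc)) (F (t i.succ)) := by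
  obtain ⟨F, hlift, hind⟩ := hf
  obtain ⟨hFc, hFm, hFP, mP, tP, ht0, ht1, htm, htaff⟩ := hlift
  have hlift' : IsPLLift F := ⟨hFc, hFm, hFP, mP, tP, ht0, ht1, htm, htaff⟩
  -- per-piece affine data in the form 2^j x + E/2^M
  have hpiece : ∀ i : Fin mP, ∃ (j e : ℤ) (M : ℕ),
      ∀ x ∈ Icc (tP i.castSucc) (tP i.succ), F x = (2:ℝ)^j * x + (e:ℝ)/2^M := by
    intro i
    obtain ⟨a, b, hab⟩ := htaff i
    obtain ⟨j, e, M, hj, he⟩ := piece_form hlam hind hFm (htm i.castSucc_lt_succ) hab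
    exact ⟨j, e, M, fun x hx => by rw [hab x hx, hj, he]⟩
  choose j E M haffd using hpiece
  set M' : Fin mP → ℕ := fun i => M i + (-(j i)).toNat with hM'
  -- breakpoint levels at junctions
  have hjun : ∀ i : Fin (mP+1), ∃ (l : ℤ) (ν : ℕ), ¬ (3:ℤ) ∣ l ∧
      (LiftBreakpointAt F (tP i) → tP i = (l:ℝ)/(3*2^ν)) := by
    intro i
    by_cases h : LiftBreakpointAt F (tP i)
    · have hb : IsBreakpoint f ((tP i : ℝ) : Circle1) := ⟨F, tP i, hlift', hind, rfl, h⟩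
      obtain ⟨l, ν, hl, hx⟩ := arcEndpoint_real_form (hbp _ hb)
      exact ⟨l, ν, hl, fun _ => hx⟩
    · exact ⟨1, 0, by norm_num, fun hc => absurd hc h⟩
  choose lv νv hl3 hlν using hjun
  -- the uniform level N
  set K : ℕ := (Finset.univ.sup fun i : Fin mP => (j i + (M' i : ℤ) + 1).toNat) ⊔
      (Finset.univ.sup fun i : Fin (mP+1) => νv i) ⊔ 1 with hK
  set N : ℕ := 2 * K with hN
  have hN1 : 1 ≤ N := by
    have : 1 ≤ K := le_sup_right
    omega
  have hbound : ∀ i : Fin mP, j i + (M' i : ℤ) + 1 ≤ (N : ℤ) := by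
    intro i
    have h1 : (j i + (M' i : ℤ) + 1).toNat ≤ K := by
      calc (j i + (M' i : ℤ) + 1).toNat
          ≤ Finset.univ.sup (fun i : Fin mP => (j i + (M' i : ℤ) + 1).toNat) :=
            Finset.le_sup (f := fun i : Fin mP => (j i + (M' i : ℤ) + 1).toNat) (Finset.mem_univ i)
        _ ≤ K := by rw [hK]; exact le_sup_left.trans le_sup_left
    have h2 : (K:ℤ) ≤ N := by rw [hN]; push_cast; omega
    calc j i + (M' i : ℤ) + 1 ≤ ((j i + (M' i : ℤ) + 1).toNat : ℤ) := Int.self_le_toNat _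
    _ ≤ (K:ℤ) := by exact_mod_cast h1
    _ ≤ (N:ℤ) := h2
  have hνbound : ∀ i : Fin (mP+1), νv i ≤ N := by
    intro i
    have h1 : νv i ≤ K := by
      calc νv i ≤ Finset.univ.sup (fun i : Fin (mP+1) => νv i) :=
            Finset.le_sup (f := fun i : Fin (mP+1) => νv i) (Finset.mem_univ i)
        _ ≤ K := by rw [hK]; exact le_sup_right.trans le_sup_left
    omega
  -- 2^N ≡ 1 mod 3
  obtain ⟨c, hc⟩ : ∃ c : ℕ, (2:ℕ)^N = 3*c+1 := by
    have : (2:ℕ)^N % 3 = 1 := by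
      rw [hN, pow_mul, Nat.pow_mod]
      norm_num
    exact ⟨2^N / 3, by omega⟩
  -- local affine form, valid on [1/3, 4/3)
  have hM'eq : ∀ i : Fin mP, ∀ e : ℤ,
      (e:ℝ)/2^(M i) = ((e * 2^((-(j i)).toNat) : ℤ):ℝ)/2^(M' i) := by
    intro i e
    rw [hM']
    push_cast
    rw [pow_add]
    have h1 : (2:ℝ)^(M i) ≠ 0 := by positivity
    have h2 : (2:ℝ)^((-(j i)).toNat) ≠ 0 := by positivity
    field_simp
  have h2jM : ∀ i : Fin mP, (2:ℝ)^((M' i + (j i)).toNat) = 2^(M' i) * 2^(j i) := by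
    intro i
    have hge : 0 ≤ (M' i : ℤ) + j i := by rw [hM']; push_cast; omega
    have : (((M' i : ℤ) + j i).toNat : ℤ) = (M' i : ℤ) + j i := Int.toNat_of_nonneg hge
    calc (2:ℝ)^(((M' i : ℤ) + (j i)).toNat) = (2:ℝ)^((((M' i : ℤ) + (j i)).toNat : ℤ)) := by
          rw [zpow_natCast]
    _ = (2:ℝ)^((M' i : ℤ) + j i) := by rw [this]
    _ = 2^(M' i) * 2^(j i) := by rw [zpow_add₀ (two_ne_zero (α := ℝ)), zpow_natCast]
  have hloc : ∀ x : ℝ, 1/3 ≤ x → x < 4/3 → ∃ i : Fin mP, ∃ ε > (0:ℝ), ∃ e' : ℤ,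
      ∀ y ∈ Icc x (x + ε), F y = (2:ℝ)^(j i) * y + (e':ℝ)/2^(M' i) := by
    intro x hx1 hx2
    by_cases hx : x < 1
    · obtain ⟨i, hi1, hi2⟩ := find_piece (x := x) htm (by rw [ht0]; linarith) (by rw [ht1]; exact hx)
      refine ⟨i, tP i.succ - x, by linarith, E i * 2^((-(j i)).toNat), fun y hy => ?_⟩
      have hym : y ∈ Icc (tP i.castSucc) (tP i.succ) :=
        ⟨le_trans hi1 hy.1, by have := hy.2; linarith⟩
      rw [haffd i y hym, hM'eq i (E i)]
    · push_neg at hx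
      obtain ⟨i, hi1, hi2⟩ := find_piece (x := x - 1) htm (by rw [ht0]; linarith) (by rw [ht1]; linarith)
      refine ⟨i, tP i.succ - (x - 1),  by linarith, E i * 2^((-(j i)).toNat) + 2^(M' i) - 2^((M' i + (j i)).toNat), fun y hy => ?_⟩
      have hym : y - 1 ∈ Icc (tP i.castSucc) (tP i.succ) :=
        ⟨le_trans hi1 (by have := hy.1; linarith), by have := hy.2; linarith⟩
      have hFy : F y = F (y - 1) + 1 := by
        have := hFP (y - 1); rw [sub_add_cancel] at this; rw [this]
      rw [hFy, haffd i (y-1) hym, hM'eq i (E i)]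
      push_cast
      rw [h2jM i]
      have h1 : (2:ℝ)^(M' i) ≠ 0 := by positivity
      field_simp
      ring
  -- the grid
  refine ⟨F, hlift', hind, 2 * 2^N, fun i => ((2^N + gOff i.val : ℕ) : ℝ)/(3*2^N), ?_, ?_, ?_⟩
  · -- strict mono
    intro a b hab
    have h1 : (2^N + gOff a.val : ℕ) < 2^N + gOff b.val := by
      have := gOff_strictMono (show a.val < b.val from hab)
      omega
    have h2 : ((2^N + gOff a.val : ℕ) : ℝ) < ((2^N + gOff b.val : ℕ) : ℝ) := by exact_mod_cast h1
    have hD : (0:ℝ) < 3*2^N := by positivity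
    rw [div_lt_div_iff₀ hD hD]
    nlinarith
  · -- endpoints
    show ((2^N + gOff (Fin.last (2*2^N)).val : ℕ) : ℝ)/(3*2^N)
        = ((2^N + gOff (0 : Fin (2*2^N+1)).val : ℕ) : ℝ)/(3*2^N) + 1
    have hv : (Fin.last (2*2^N)).val = 2*2^N := rfl
    have h0v : (0 : Fin (2*2^N+1)).val = 0 := rfl
    rw [hv, h0v, gOff_top, gOff_zero]
    have h2N : (2:ℝ)^N ≠ 0 := by positivity
    push_cast
    field_simp; ring
  · intro i
    show IsStdPair (((2^N + gOff i.val : ℕ):ℝ)/(3*2^N)) (((2^N + gOff (i.val+1) : ℕ):ℝ)/(3*2^N)) ∧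
      AffineOn F (((2^N + gOff i.val : ℕ):ℝ)/(3*2^N)) (((2^N + gOff (i.val+1) : ℕ):ℝ)/(3*2^N)) ∧
      IsStdPair (F (((2^N + gOff i.val : ℕ):ℝ)/(3*2^N))) (F (((2^N + gOff (i.val+1) : ℕ):ℝ)/(3*2^N)))
    set α : ℝ := ((2^N + gOff i.val : ℕ):ℝ)/(3*2^N) with hαdef
    set β : ℝ := ((2^N + gOff (i.val+1) : ℕ):ℝ)/(3*2^N) with hβdef
    have hD : (0:ℝ) < 3*2^N := by positivity
    have hαβ : α < β := by
      rw [hαdef, hβdef, div_lt_div_iff₀ hD hD]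
      have h1 : (2^N + gOff i.val : ℕ) < 2^N + gOff (i.val+1) := by
        have := gOff_strictMono (show i.val < i.val + 1 by omega); omega
      have h2 : ((2^N + gOff i.val : ℕ) : ℝ) < ((2^N + gOff (i.val+1) : ℕ) : ℝ) := by
        exact_mod_cast h1
      nlinarith
    obtain ⟨kk, hcase⟩ := grid_cases N c hc i.val
    -- no breakpoints strictly inside the grid interval
    have hnb : ∀ x, α < x → x < β → ¬ LiftBreakpointAt F x := by
      intro x hx1 hx2 hbrkx
      obtain ⟨i0, z, hxz⟩ := breakpoint_at_junction hFP ht0 ht1 htm htaff hbrkx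
      have hb0 : LiftBreakpointAt F (tP i0.castSucc) := by
        have h2 := liftBreakpointAt_translate hFP (-z) hbrkx
        rwa [show x + ((-z:ℤ):ℝ) = tP i0.castSucc by rw [hxz]; push_cast; ring] at h2
      have hform := hlν i0.castSucc hb0
      have hνN := hνbound i0.castSucc
      have hl3' := hl3 i0.castSucc
      set νx : ℕ := νv i0.castSucc with hνx
      set l' : ℤ := lv i0.castSucc + 3*2^νx*z with hl'def
      have hx' : x = (l':ℝ)/(3*2^νx) := by
        rw [hxz, hform, hl'def]
        have : (0:ℝ) < 3*2^νx := by positivity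
        push_cast
        field_simp
      have hl3'' : ¬ (3:ℤ) ∣ l' := by
        intro h
        apply hl3'
        have h2 : (3:ℤ) ∣ l' - 3*(2^νx*z) := h.sub ⟨2^νx*z, by ring⟩
        have h3 : l' - 3*(2^νx*z) = lv i0.castSucc := by rw [hl'def]; ring
        rwa [h3] at h2
      rw [hx'] at hx1 hx2
      exact grid_no_interior N c hc i.val hνN hl3'' hx1 hx2
    -- affine on the grid interval, with known coefficients
    have hα13 : 1/3 ≤ α := by
      rw [hαdef, div_le_div_iff₀ (by norm_num : (0:ℝ) < 3) hD]
      have h1 : ((2:ℕ)^N : ℝ) ≤ ((2^N + gOff i.val : ℕ) : ℝ) := by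
        exact_mod_cast Nat.le_add_right _ _
      push_cast at h1 ⊢
      nlinarith
    have hα43 : α < 4/3 := by
      have hβle : β ≤ 4/3 := by
        rw [hβdef, div_le_div_iff₀ hD (by norm_num : (0:ℝ) < 3)]
        have h1 : (2^N + gOff (i.val+1) : ℕ) ≤ 2^N + 3*2^N := by
          have h2 : i.val + 1 ≤ 2*2^N := i.isLt
          have := gOff_strictMono.monotone h2
          rw [gOff_top] at this
          omega
        have h1' : ((2^N + gOff (i.val+1) : ℕ) : ℝ) ≤ ((2^N + 3*2^N : ℕ) : ℝ) := by
          exact_mod_cast h1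
        push_cast at h1' ⊢
        nlinarith
      linarith
    obtain ⟨i0, ε, hε, e', hle⟩ := hloc α hα13 hα43
    have hFα : F α = (2:ℝ)^(j i0)*α + (e':ℝ)/2^(M' i0) :=
      hle α ⟨le_refl _, by linarith⟩
    have haffβ := affine_extend hFc hαβ
      ⟨ε, hε, fun y hy => by rw [hle y hy, hFα]; ring⟩
      (fun x _ _ => right_slope_exists hFP ht0 ht1 htm htaff x) hnb
    have haffG : ∀ x ∈ Icc α β, F x = (2:ℝ)^(j i0)*x + (e':ℝ)/2^(M' i0) := by
      intro x hx
      rw [haffβ x hx, hFα]; ring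
    have hFβ : F β = (2:ℝ)^(j i0)*β + (e':ℝ)/2^(M' i0) :=
      haffG β ⟨hαβ.le, le_refl _⟩
    -- image level
    set R' : ℕ := ((N:ℤ) - j i0).toNat with hR'
    have hb := hbound i0
    have hjR : j i0 + (R':ℤ) = (N:ℤ) := by
      rw [hR']
      have : (0:ℤ) ≤ (N:ℤ) - j i0 := by omega
      rw [Int.toNat_of_nonneg this]; ring
    have hMR : M' i0 ≤ R' := by
      have h1 : ((M' i0 : ℤ)) ≤ (R':ℤ) := by omega
      exact_mod_cast h1
    have hR'1 : 1 ≤ R' := by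
      have h1 : (1:ℤ) ≤ (R':ℤ) := by omega
      exact_mod_cast h1
    rcases hcase with ⟨e1, e2⟩ | ⟨e1, e2⟩
    · have hαr : α = (3*(kk:ℝ)+1)/(3*2^N) := by
        rw [hαdef]; congr 1; exact_mod_cast e1
      have hβr : β = (3*(kk:ℝ)+2)/(3*2^N) := by
        rw [hβdef]; congr 1; exact_mod_cast e2
      refine ⟨stdPair_of_numerators hN1 (Or.inl ⟨hαr, hβr⟩),
        ⟨(2:ℝ)^(j i0), (e':ℝ)/2^(M' i0), haffG⟩,
        stdPair_of_numerators (kk := kk + e' * 2^(R' - M' i0)) hR'1 (Or.inl ⟨?_, ?_⟩)⟩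
      · rw [hFα, hαr, image_affine_numerator 1 hjR hMR]
      · rw [hFβ, hβr, image_affine_numerator 2 hjR hMR]
    · have hαr : α = (3*(kk:ℝ)+(-1))/(3*2^N) := by
        rw [hαdef]
        have : ((2^N + gOff i.val : ℕ) : ℝ) = 3*(kk:ℝ)+(-1) := by
          push_cast
          exact_mod_cast e1
        rw [this]
      have hβr : β = (3*(kk:ℝ)+1)/(3*2^N) := by
        rw [hβdef]; congr 1; exact_mod_cast e2
      have hαr' : α = (3*(kk:ℝ)-1)/(3*2^N) := by rw [hαr]; ring_nf
      refine ⟨stdPair_of_numerators hN1 (Or.inr ⟨hαr', hβr⟩),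
        ⟨(2:ℝ)^(j i0), (e':ℝ)/2^(M' i0), haffG⟩,
        stdPair_of_numerators (kk := kk + e' * 2^(R' - M' i0)) hR'1 (Or.inr ⟨?_, ?_⟩)⟩
      · rw [hFα, hαr, image_affine_numerator (-1) hjR hMR]; ring_nf
      · rw [hFβ, hβr, image_affine_numerator 1 hjR hMR]


/-- For a PL homeomorphism `f` of the circle preserving the Basilica lamination: every
breakpoint of `f` is an arc endpoint iff there is a finite subdivision of the circle into
standard intervals such that `f` is affine on each of them and maps each onto a standard
interval. -/
theorem breakpoints_arcEndpoints_iff_standard_subdivision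
    (f : Equiv.Perm Circle1) (hf : IsPLHomeo f) (hlam : PreservesLamination f) :
    (∀ p : Circle1, IsBreakpoint f p → IsArcEndpoint p) ↔
      ∃ F : ℝ → ℝ, IsPLLift F ∧ InducedBy f F ∧
        ∃ (m : ℕ) (t : Fin (m + 1) → ℝ), StrictMono t ∧ t (Fin.last m) = t 0 + 1 ∧
          ∀ i : Fin m,
            IsStdPair (t i.castSucc) (t i.succ) ∧
            AffineOn F (t i.castSucc) (t i.succ) ∧
            IsStdPair (F (t i.castSucc)) (F (t i.succ)) := by
  constructor
  · intro hbp
    exact forward_dir hf hlam hbp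
  · intro h
    exact reverse_dir h
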